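/- Let X be the character lattice of SL_{2r} of type A_{2r−1} (so X = P, the weight lattice) and σ the order-2 diagram automorphism. More generally, let X be a σ-stable lattice with Q ⊆ X ⊆ P and |P/X| = d. Then Ker(1 + σ | X)/(σ − 1)X is nontrivial (of order 2) if and only if d is even and 2d divides 2r; equivalently, if and only if d is even and d divides r. -/

import Mathlib

open Submodule

lemma nt1_aux (m r : ℕ) (hm0 : m ≠ 0) (hmn : m ∣ 2*r) (h : ¬(Even m ∧ m ∣ r)) :
    Nat.gcd (2*m) (2*r) ∣ Nat.lcm 2 m := by
  by_cases he : Even m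
  · have hmr : ¬ m ∣ r := fun h' => h ⟨he, h'⟩
    have hg0m : Nat.gcd m r ∣ m := Nat.gcd_dvd_left m r
    have hg0r : Nat.gcd m r ∣ r := Nat.gcd_dvd_right m r
    have hg0pos : 0 < Nat.gcd m r := Nat.gcd_pos_of_pos_left r (Nat.pos_of_ne_zero hm0)
    have hco : Nat.Coprime (m / Nat.gcd m r) (r / Nat.gcd m r) :=
      Nat.coprime_div_gcd_div_gcd hg0pos
    have hdvd : m / Nat.gcd m r ∣ 2 * (r / Nat.gcd m r) := by
      have h1 : Nat.gcd m r * (m / Nat.gcd m r) ∣ Nat.gcd m r * (2 * (r / Nat.gcd m r)) := by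
        rw [Nat.mul_div_cancel' hg0m, show Nat.gcd m r * (2 * (r / Nat.gcd m r))
          = 2 * (Nat.gcd m r * (r / Nat.gcd m r)) by ring, Nat.mul_div_cancel' hg0r]
        exact hmn
      exact (Nat.mul_dvd_mul_iff_left hg0pos).mp h1
    have h2' : m / Nat.gcd m r ∣ 2 := hco.dvd_of_dvd_mul_right hdvd
    have h22 : m / Nat.gcd m r = 2 := by
      rcases (Nat.dvd_prime Nat.prime_two).mp h2' with h1 | h1
      · exfalso
        have : m = Nat.gcd m r := by
          conv_lhs => rw [← Nat.mul_div_cancel' hg0m]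
          rw [h1, mul_one]
        exact hmr (this ▸ hg0r)
      · exact h1
    have hm2 : m = 2 * Nat.gcd m r := by
      conv_lhs => rw [← Nat.mul_div_cancel' hg0m, h22, mul_comm]
    rw [Nat.gcd_mul_left, ← hm2]
    exact Nat.dvd_lcm_right 2 m
  · have hco : Nat.Coprime m 2 := by
      rw [Nat.coprime_two_right]
      exact Nat.not_even_iff_odd.mp he
    have hmr : m ∣ r := hco.dvd_of_dvd_mul_left hmn
    rw [Nat.gcd_mul_left, Nat.gcd_eq_left hmr, Nat.Coprime.lcm_eq_mul hco.symm]

theorem ker_one_add_sigma_mod_image_A_odd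
    (r : ℕ) (hr : 1 ≤ r)
    (D : Submodule ℤ (Fin (2 * r) → ℤ))
    (hD : D = Submodule.span ℤ {fun _ => (1 : ℤ)})
    (σ₀ : (Fin (2 * r) → ℤ) →ₗ[ℤ] (Fin (2 * r) → ℤ))
    (hσ₀ : ∀ (v : Fin (2 * r) → ℤ) (i : Fin (2 * r)), σ₀ v i = - v i.rev)
    (τ : ((Fin (2 * r) → ℤ) ⧸ D) →ₗ[ℤ] ((Fin (2 * r) → ℤ) ⧸ D))
    (hτ : ∀ v : Fin (2 * r) → ℤ,
      τ (Submodule.Quotient.mk v) = Submodule.Quotient.mk (σ₀ v))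
    (Q X : Submodule ℤ ((Fin (2 * r) → ℤ) ⧸ D))
    (hQ : Q = Submodule.map D.mkQ
      (LinearMap.ker (∑ i : Fin (2 * r), LinearMap.proj (R := ℤ) (φ := fun _ => ℤ) i)))
    (hQX : Q ≤ X) (hXσ : X.map τ = X)
    (d : ℕ) (hd : d = Nat.card (((Fin (2 * r) → ℤ) ⧸ D) ⧸ X))
    (K I : Submodule ℤ ((Fin (2 * r) → ℤ) ⧸ D))
    (hK : K = LinearMap.ker (τ + LinearMap.id) ⊓ X)       -- Ker(1 + σ | X)
    (hI : I = Submodule.map (τ - LinearMap.id) X) :       -- (σ - 1) X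
    (I ≠ K ↔ (Even d ∧ d ∣ r)) ∧
    (I ≠ K → Nat.card (↥K ⧸ Submodule.comap K.subtype I) = 2) := by
  classical
  subst hQ
  set S : (Fin (2 * r) → ℤ) →ₗ[ℤ] ℤ :=
    ∑ i : Fin (2 * r), LinearMap.proj (R := ℤ) (φ := fun _ => ℤ) i with hS
  have hSapp : ∀ v : Fin (2 * r) → ℤ, S v = ∑ i, v i := by
    intro v
    simp [hS, LinearMap.sum_apply, LinearMap.proj_apply]
  have hSrev : ∀ v : Fin (2 * r) → ℤ, (∑ i : Fin (2 * r), v i.rev) = ∑ i, v i :=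
    fun v => Fin.rev_bijective.sum_comp v
  -- the lattice upstairs
  set L : Submodule ℤ (Fin (2 * r) → ℤ) := X.comap D.mkQ with hL
  have hXL : L.map D.mkQ = X := Submodule.map_comap_eq_of_surjective (D.mkQ_surjective) X
  have hDL : D ≤ L := by
    intro x hx
    show D.mkQ x ∈ X
    rw [show D.mkQ x = 0 from (Submodule.Quotient.mk_eq_zero D).mpr hx]
    exact X.zero_mem
  have hkerS : LinearMap.ker S ≤ L := Submodule.map_le_iff_le_comap.mp hQX
  have hone : (fun _ => (1:ℤ)) ∈ D := hD ▸ Submodule.mem_span_singleton_self _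
  have hSone : S (fun _ => (1:ℤ)) = ((2 * r : ℕ) : ℤ) := by
    simp [hSapp]
  have mem_D : ∀ v : Fin (2 * r) → ℤ, v ∈ D ↔ ∃ c : ℤ, ∀ i, v i = c := by
    intro v
    rw [hD, Submodule.mem_span_singleton]
    constructor
    · rintro ⟨c, rfl⟩
      exact ⟨c, fun i => by simp⟩
    · rintro ⟨c, hc⟩
      exact ⟨c, funext fun i => by simp [hc i]⟩
  -- the generator
  obtain ⟨a, ha⟩ := Submodule.IsPrincipal.principal (L.map S)
  set m : ℕ := a.natAbs with hm
  have hspan : L.map S = Submodule.span ℤ {(m : ℤ)} := by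
    rw [ha]; exact (Int.span_natAbs a).symm
  have hmem_span : ∀ x : ℤ, x ∈ L.map S ↔ (m : ℤ) ∣ x := by
    intro x
    rw [hspan]
    exact Ideal.mem_span_singleton
  have hmn : m ∣ 2 * r := by
    have : ((2*r : ℕ) : ℤ) ∈ L.map S := ⟨_, hDL hone, hSone⟩
    exact_mod_cast (hmem_span _).mp this
  have hm0 : m ≠ 0 := by
    intro h0
    rw [h0] at hmn
    have := Nat.eq_zero_of_zero_dvd hmn
    omega
  have mem_L : ∀ v, v ∈ L ↔ (m : ℤ) ∣ S v := by
    intro v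
    constructor
    · intro hv
      exact (hmem_span _).mp ⟨v, hv, rfl⟩
    · intro hv
      obtain ⟨w, hwL, hwS⟩ := (hmem_span (S v)).mpr hv
      have hker : v - w ∈ LinearMap.ker S := by
        rw [LinearMap.mem_ker, map_sub, hwS, sub_self]
      have : v - w ∈ L := hkerS hker
      simpa using L.add_mem this hwL
  -- the index is m
  have hi0 : (0 : ℕ) < 2 * r := by omega
  have hφsurj : Function.Surjective ((Submodule.span ℤ {(m:ℤ)}).mkQ.comp S) := by
    intro z
    obtain ⟨y, rfl⟩ := Submodule.mkQ_surjective _ z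
    refine ⟨fun j => if j = ⟨0, hi0⟩ then y else 0, ?_⟩
    simp only [LinearMap.comp_apply, hSapp]
    rw [Finset.sum_ite_eq' Finset.univ (⟨0, hi0⟩ : Fin (2*r)) (fun _ => y)]
    simp
  have hkerφ : LinearMap.ker ((Submodule.span ℤ {(m:ℤ)}).mkQ.comp S) = L := by
    ext v
    rw [LinearMap.mem_ker, LinearMap.comp_apply, Submodule.mkQ_apply,
      Submodule.Quotient.mk_eq_zero, mem_L]
    exact Ideal.mem_span_singleton
  have hdm : d = m := by
    rw [hd]
    rw [Nat.card_congr ((Submodule.quotEquivOfEq X (L.map D.mkQ) hXL.symm).toEquiv)]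
    rw [Nat.card_congr ((Submodule.quotientQuotientEquivQuotient D L hDL).toEquiv)]
    rw [Nat.card_congr ((Submodule.quotEquivOfEq L _ hkerφ.symm).toEquiv)]
    rw [Nat.card_congr ((LinearMap.quotKerEquivOfSurjective _ hφsurj).toEquiv)]
    calc Nat.card (ℤ ⧸ Submodule.span ℤ {((m:ℕ):ℤ)}) = Nat.card (ZMod m) :=
          Nat.card_congr (Int.quotientSpanNatEquivZMod m).toEquiv
      _ = m := Nat.card_zmod m
  subst hdm
  -- half decomposition of symmetric vectors
  have hhalf : ∀ v : Fin (2 * r) → ℤ, (∀ i, v i.rev = v i) →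
      ∃ u : Fin (2 * r) → ℤ, (∀ i, u i + u i.rev = v i) ∧ S v = 2 * S u := by
    intro v hsym
    set u : Fin (2 * r) → ℤ := fun i => if (i : ℕ) < r then v i else 0 with hu
    have hdecomp : ∀ i, u i + u i.rev = v i := by
      intro i
      by_cases h : (i : ℕ) < r
      · have h2 : ¬ ((i.rev : ℕ) < r) := by
          rw [Fin.val_rev]; have := i.isLt; omega
        rw [hu]
        simp only []
        rw [if_pos h, if_neg h2, add_zero]
      · have h2 : (i.rev : ℕ) < r := by
          rw [Fin.val_rev]; have := i.isLt; omega
        rw [hu]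
        simp only []
        rw [if_pos h2, if_neg h, zero_add, hsym i]
    refine ⟨u, hdecomp, ?_⟩
    calc S v = ∑ i, (u i + u i.rev) := by
            rw [hSapp]
            exact Finset.sum_congr rfl fun i _ => (hdecomp i).symm
      _ = (∑ i, u i) + ∑ i : Fin (2 * r), u i.rev := Finset.sum_add_distrib
      _ = 2 * S u := by rw [hSrev u, hSapp]; ring
  -- characterization of K
  have hKmem : ∀ x, x ∈ K ↔
      ∃ v : Fin (2 * r) → ℤ, (∀ i, v i.rev = v i) ∧ (m : ℤ) ∣ S v ∧ D.mkQ v = x := by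
    intro x
    rw [hK, Submodule.mem_inf]
    constructor
    · rintro ⟨hx1, hx2⟩
      rw [← hXL] at hx2
      obtain ⟨v, hvL, rfl⟩ := hx2
      rw [LinearMap.mem_ker, LinearMap.add_apply, LinearMap.id_apply,
        Submodule.mkQ_apply, hτ] at hx1
      have hDmem : σ₀ v + v ∈ D := by
        rw [← Submodule.Quotient.mk_eq_zero D, Submodule.Quotient.mk_add]
        exact hx1
      obtain ⟨c, hc⟩ := (mem_D _).mp hDmem
      have hc' : ∀ i : Fin (2 * r), - v i.rev + v i = c := by
        intro i
        have := hc i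
        rwa [Pi.add_apply, hσ₀] at this
      have hc0 : c = 0 := by
        have h1 := hc' ⟨0, hi0⟩
        have h2 := hc' (Fin.rev ⟨0, hi0⟩)
        rw [Fin.rev_rev] at h2
        omega
      refine ⟨v, ?_, (mem_L v).mp hvL, rfl⟩
      intro i
      have := hc' i
      rw [hc0] at this
      omega
    · rintro ⟨v, hsym, hdvd, rfl⟩
      constructor
      · rw [LinearMap.mem_ker, LinearMap.add_apply, LinearMap.id_apply,
          Submodule.mkQ_apply, hτ, ← Submodule.Quotient.mk_add]
        have : σ₀ v + v = 0 := by
          funext i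
          simp only [Pi.add_apply, Pi.zero_apply, hσ₀, hsym i]
          ring
        rw [this]
        exact (Submodule.Quotient.mk_eq_zero D).mpr D.zero_mem
      · rw [← hXL]
        exact Submodule.mem_map_of_mem ((mem_L v).mpr hdvd)
  -- characterization of I, part 1 (every element has a symmetric rep with 2m ∣ sum)
  have hImem1 : ∀ x ∈ I, ∃ v : Fin (2 * r) → ℤ,
      (∀ i, v i.rev = v i) ∧ (2 * (m : ℤ)) ∣ S v ∧ D.mkQ v = x := by
    rw [hI]
    rintro x ⟨y, hyX, rfl⟩
    rw [← hXL] at hyX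
    obtain ⟨u, huL, rfl⟩ := hyX
    refine ⟨σ₀ u - u, ?_, ?_, ?_⟩
    · intro i
      simp only [Pi.sub_apply, hσ₀, Fin.rev_rev]
      ring
    · have h1 : S (σ₀ u) = - S u := by
        rw [hSapp, hSapp]
        calc (∑ i, σ₀ u i) = ∑ i : Fin (2 * r), (- u i.rev) :=
              Finset.sum_congr rfl fun i _ => hσ₀ u i
          _ = - ∑ i : Fin (2 * r), u i.rev := by rw [Finset.sum_neg_distrib]
          _ = - ∑ i, u i := by rw [hSrev]
      rw [map_sub, h1]
      obtain ⟨k, hk⟩ := (mem_L u).mp huL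
      exact ⟨-k, by rw [hk]; ring⟩
    · simp only [LinearMap.sub_apply, LinearMap.id_apply, Submodule.mkQ_apply]
      rw [hτ, ← Submodule.Quotient.mk_sub]
  -- characterization of I, part 2 (symmetric vectors with gcd(2m,2r) ∣ sum map into I)
  have hImem2 : ∀ v : Fin (2 * r) → ℤ, (∀ i, v i.rev = v i) →
      ((Nat.gcd (2*m) (2*r) : ℕ) : ℤ) ∣ S v → D.mkQ v ∈ I := by
    have stepA : ∀ v : Fin (2 * r) → ℤ, (∀ i, v i.rev = v i) →
        (2 * (m : ℤ)) ∣ S v → D.mkQ v ∈ I := by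
      intro v hsym hdvd
      obtain ⟨u, hdecomp, hSu⟩ := hhalf v hsym
      have huL : u ∈ L := by
        rw [mem_L]
        rw [hSu] at hdvd
        exact (mul_dvd_mul_iff_left (by norm_num : (2:ℤ) ≠ 0)).mp hdvd
      have hmem : - D.mkQ v ∈ I := by
        rw [hI]
        refine ⟨D.mkQ u, hXL ▸ Submodule.mem_map_of_mem huL, ?_⟩
        simp only [LinearMap.sub_apply, LinearMap.id_apply, Submodule.mkQ_apply]
        rw [hτ, ← Submodule.Quotient.mk_sub]
        have huv : σ₀ u - u = - v := by
          funext i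
          simp only [Pi.sub_apply, Pi.neg_apply, hσ₀, ← hdecomp i]
          ring
        rw [huv, ← Submodule.Quotient.mk_neg]
      simpa using I.neg_mem hmem
    intro v hsym hg
    obtain ⟨k, hk⟩ := hg
    have hbez := Nat.gcd_eq_gcd_ab (2*m) (2*r)
    set A : ℤ := Nat.gcdA (2*m) (2*r) with hA
    set B : ℤ := Nat.gcdB (2*m) (2*r) with hB
    set v' : Fin (2 * r) → ℤ := fun i => v i - B * k with hv'
    have hsym' : ∀ i, v' i.rev = v' i := by
      intro i
      rw [hv']
      simp only []
      rw [hsym i]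
    have hv'eq : v - v' = (B * k) • (fun _ => (1:ℤ)) := by
      funext i
      simp [hv']
    have hveq : v = v' + (B * k) • (fun _ => (1:ℤ)) := by
      funext i
      simp [hv']
    have hSv' : S v' = 2 * (m : ℤ) * (A * k) := by
      have h1 : S v = S v' + (B * k) * ((2 * r : ℕ) : ℤ) := by
        conv_lhs => rw [hveq]
        rw [map_add, map_smul, hSone, smul_eq_mul]
      rw [hk, hbez] at h1
      push_cast at h1 ⊢
      linear_combination -h1
    have hv'I : D.mkQ v' ∈ I := stepA v' hsym' ⟨A * k, hSv'⟩
    have heq2 : D.mkQ v = D.mkQ v' := by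
      rw [Submodule.mkQ_apply, Submodule.mkQ_apply, Submodule.Quotient.eq]
      rw [hv'eq]
      exact D.smul_mem _ hone
    rwa [heq2]
  -- I is contained in K
  have hIK : I ≤ K := by
    intro x hx
    obtain ⟨v, hsym, hdvd, rfl⟩ := hImem1 x hx
    exact (hKmem _).mpr ⟨v, hsym, (dvd_mul_left (m:ℤ) 2).trans hdvd, rfl⟩
  by_cases hcond : Even m ∧ m ∣ r
  · -- nontrivial case
    obtain ⟨hEv, hmr⟩ := hcond
    have hg2m : Nat.gcd (2*m) (2*r) = 2 * m := by
      rw [Nat.gcd_mul_left, Nat.gcd_eq_left hmr]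
    obtain ⟨c, hc⟩ := hEv
    have hi₀ne : (⟨0, hi0⟩ : Fin (2*r)) ≠ (⟨0, hi0⟩ : Fin (2*r)).rev := by
      intro h
      have := congrArg Fin.val h
      rw [Fin.val_rev] at this
      simp only at this
      omega
    set i₀ : Fin (2*r) := ⟨0, hi0⟩ with hi₀
    set v₀ : Fin (2*r) → ℤ := fun i => if i = i₀ ∨ i = i₀.rev then (c:ℤ) else 0 with hv₀
    have hsym₀ : ∀ i, v₀ i.rev = v₀ i := by
      intro i
      have hcond_iff : (i.rev = i₀ ∨ i.rev = i₀.rev) ↔ (i = i₀ ∨ i = i₀.rev) := by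
        rw [Fin.rev_eq_iff, Fin.rev_eq_iff, Fin.rev_rev]
        exact or_comm
      rw [hv₀]
      simp only []
      rw [if_congr hcond_iff rfl rfl]
    have hSv₀ : S v₀ = (m : ℤ) := by
      rw [hSapp]
      have hpt : ∀ i, v₀ i = if i ∈ ({i₀, i₀.rev} : Finset (Fin (2*r))) then (c:ℤ) else 0 := by
        intro i
        rw [hv₀]
        simp only [Finset.mem_insert, Finset.mem_singleton]
      rw [Finset.sum_congr rfl (fun i _ => hpt i), Finset.sum_ite_mem, Finset.univ_inter,
        Finset.sum_const, Finset.card_insert_of_notMem (by simpa using hi₀ne),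
        Finset.card_singleton]
      have : m = c + c := hc
      push_cast [this]
      ring
    have hx₀K : D.mkQ v₀ ∈ K := (hKmem _).mpr ⟨v₀, hsym₀, hSv₀ ▸ dvd_refl _, rfl⟩
    have h2m2r : (2*(m:ℤ)) ∣ ((2*r : ℕ) : ℤ) := by
      obtain ⟨t, ht⟩ := hmr
      exact ⟨t, by rw [show (2*r : ℕ) = 2 * (m * t) from by rw [← ht]]; push_cast; ring⟩
    have hx₀I : D.mkQ v₀ ∉ I := by
      intro hx
      obtain ⟨v, hsym, hdvd, hmk⟩ := hImem1 _ hx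
      have hmemD : v - v₀ ∈ D := by
        rw [Submodule.mkQ_apply, Submodule.mkQ_apply] at hmk
        exact (Submodule.Quotient.eq D).mp hmk
      obtain ⟨c', hc'⟩ := (mem_D _).mp hmemD
      have hSdiff : S v - S v₀ = ((2*r : ℕ) : ℤ) * c' := by
        rw [← map_sub, hSapp]
        calc (∑ i, (v - v₀) i) = ∑ _i : Fin (2*r), c' :=
              Finset.sum_congr rfl (fun i _ => hc' i)
          _ = ((2*r : ℕ) : ℤ) * c' := by
              rw [Finset.sum_const, Finset.card_univ, Fintype.card_fin, nsmul_eq_mul]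
      have hdvd₀ : (2*(m:ℤ)) ∣ S v₀ := by
        have heq : S v₀ = S v - ((2*r : ℕ) : ℤ) * c' := by linarith
        rw [heq]
        exact dvd_sub hdvd (h2m2r.mul_right c')
      rw [hSv₀] at hdvd₀
      have hm_pos : (0:ℤ) < (m:ℤ) := by exact_mod_cast Nat.pos_of_ne_zero hm0
      have := Int.le_of_dvd hm_pos hdvd₀
      omega
    have hne : I ≠ K := fun h => hx₀I ((le_of_eq h.symm) hx₀K)
    refine ⟨⟨fun _ => ⟨⟨c, hc⟩, hmr⟩, fun _ => hne⟩, fun _ => ?_⟩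
    rw [Nat.card_eq_two_iff]
    refine ⟨0, Submodule.Quotient.mk ⟨D.mkQ v₀, hx₀K⟩, ?_, ?_⟩
    · intro h
      apply hx₀I
      have hmem : (⟨D.mkQ v₀, hx₀K⟩ : K) ∈ Submodule.comap K.subtype I :=
        (Submodule.Quotient.mk_eq_zero _).mp h.symm
      simpa using hmem
    · rw [Set.eq_univ_iff_forall]
      intro z
      obtain ⟨⟨y, hyK⟩, rfl⟩ := Submodule.Quotient.mk_surjective _ z
      obtain ⟨v, hsym, hdvd, hy⟩ := (hKmem y).mp hyK
      obtain ⟨q, hq⟩ := hdvd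
      obtain ⟨u, hdecomp, hSu⟩ := hhalf v hsym
      rcases Int.even_or_odd q with ⟨t, ht⟩ | ⟨t, ht⟩
      · refine Set.mem_insert_iff.mpr (Or.inl ?_)
        rw [Submodule.Quotient.mk_eq_zero, Submodule.mem_comap]
        show y ∈ I
        rw [← hy]
        apply hImem2 v hsym
        rw [hg2m, hq, ht]
        push_cast
        exact ⟨t, by ring⟩
      · refine Set.mem_insert_iff.mpr (Or.inr (Set.mem_singleton_iff.mpr ?_))
        rw [Submodule.Quotient.eq, Submodule.mem_comap]
        show y - D.mkQ v₀ ∈ I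
        rw [← hy, ← map_sub]
        apply hImem2 (v - v₀) (fun i => by simp [hsym i, hsym₀ i])
        rw [hg2m, map_sub, hq, hSv₀, ht]
        push_cast
        exact ⟨t, by ring⟩
  · -- trivial case
    have hKI : K ≤ I := by
      intro x hx
      obtain ⟨v, hsym, hdvd, rfl⟩ := (hKmem x).mp hx
      obtain ⟨u, hdecomp, hSu⟩ := hhalf v hsym
      have h2 : (2:ℤ) ∣ S v := ⟨S u, hSu⟩
      have hlcm : ((Nat.lcm 2 m : ℕ) : ℤ) ∣ S v := by
        have hl := Int.ofNat_dvd_left.mpr (Int.lcm_dvd (Int.dvd_natAbs.mpr h2) (Int.dvd_natAbs.mpr hdvd))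
        rwa [show Int.lcm 2 (m:ℤ) = Nat.lcm 2 m from by simp [Int.lcm]] at hl
      have hnt : ((Nat.gcd (2*m) (2*r) : ℕ) : ℤ) ∣ ((Nat.lcm 2 m : ℕ) : ℤ) :=
        Int.natCast_dvd_natCast.mpr (nt1_aux m r hm0 hmn hcond)
      exact hImem2 v hsym (hnt.trans hlcm)
    have heqIK : I = K := le_antisymm hIK hKI
    exact ⟨⟨fun hne => absurd heqIK hne, fun hcc => absurd hcc hcond⟩,
      fun hne => absurd heqIK hne⟩
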